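/- The category of small sets has enough subobjects: every presheaf P : Setᵒᵖ → Set that preserves small products and admits a monomorphism into a representable presheaf Set(−, X) is itself representable. -/

import Mathlib

open CategoryTheory CategoryTheory.Limits

universe u

/-- Statement 12: The category of small sets has enough subobjects: every presheaf
`P : Setᵒᵖ ⥤ Set` that preserves small products (i.e. all small products, which exist
in `Setᵒᵖ`) and admits a monomorphism (a componentwise injective natural transformation)
into a representable presheaf `Set(-, X)` is itself representable. -/
theorem type_hasEnoughSubobjects (P : (Type u)ᵒᵖ ⥤ Type u)
    (hP : ∀ ι : Type u, PreservesLimitsOfShape (Discrete ι) P)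
    (X : Type u) (f : P ⟶ yoneda.obj X)
    (hf : ∀ A : (Type u)ᵒᵖ, Function.Injective (f.app A)) :
    P.IsRepresentable := by
  classical
  set Q : Type u := P.obj (Opposite.op PUnit) with hQ
  -- the comparison map
  let g : ∀ A : Type u, P.obj (Opposite.op A) → (A → Q) :=
    fun A x a => P.map (Quiver.Hom.op (TypeCat.ofHom (fun _ : PUnit => a))) x
  -- For each A, the cone exhibiting `op A` as the product of `A` copies of `op PUnit`.
  have gbij : ∀ A : Type u, Function.Bijective (g A) := by
    intro A
    let D : Discrete A ⥤ (Type u)ᵒᵖ :=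
      Discrete.functor (fun _ : A => Opposite.op PUnit)
    let c : Cone D :=
      { pt := Opposite.op A
        π := Discrete.natTrans (fun a => Quiver.Hom.op (TypeCat.ofHom (fun _ : PUnit => a.as))) }
    have hc : IsLimit c :=
      { lift := fun s => Quiver.Hom.op (TypeCat.ofHom (fun a => (s.π.app ⟨a⟩).unop PUnit.unit))
        fac := fun s j => by
          obtain ⟨a⟩ := j
          apply Quiver.Hom.unop_inj
          ext u
          cases u
          rfl
        uniq := fun s m hm => by
          apply Quiver.Hom.unop_inj
          ext a
          exact ConcreteCategory.congr_hom (congrArg Quiver.Hom.unop (hm ⟨a⟩)) PUnit.unit }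
    haveI := hP A
    have hl : IsLimit (P.mapCone c) := isLimitOfPreserves P hc
    let e := Types.isLimitEquivSections hl
    constructor
    · intro x y hxy
      apply e.injective
      apply Subtype.ext
      funext j
      obtain ⟨a⟩ := j
      show g A x a = g A y a
      exact congr_fun hxy a
    · intro s
      have hsec : ∀ ⦃j j' : Discrete A⦄ (φ : j ⟶ j'),
          (D ⋙ P).map φ (s j.as) = s j'.as := by
        intro j j' φ
        obtain ⟨a⟩ := j
        obtain ⟨a'⟩ := j'
        have h : a = a' := Discrete.eq_of_hom φ
        subst h
        have : φ = 𝟙 _ := Subsingleton.elim _ _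
        subst this
        simp
      refine ⟨e.symm ⟨fun j => s j.as, fun {j j'} φ => hsec φ⟩, ?_⟩
      funext a
      have := congrArg Subtype.val (e.apply_symm_apply ⟨fun j => s j.as, fun {j j'} φ => hsec φ⟩)
      exact congr_fun this ⟨a⟩
  -- assemble a natural isomorphism `P ≅ yoneda.obj Q`
  have nat : ∀ {A B : (Type u)ᵒᵖ} (h : A ⟶ B),
      ∀ x : P.obj A, g B.unop (P.map h x) = fun b => g A.unop x (h.unop b) := by
    intro A B h x
    funext b
    show P.map _ (P.map h x) = P.map _ x
    rw [← FunctorToTypes.map_comp_apply]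
    rfl
  refine Functor.IsRepresentable.mk' (F := P) (X := Q) ?_
  refine (NatIso.ofComponents
    (fun A => ((Equiv.ofBijective (g A.unop) (gbij A.unop)).trans TypeCat.homEquiv.symm).toIso) ?_).symm
  intro A B h
  ext x
  exact congrArg TypeCat.homEquiv.symm (nat h x)
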